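/- The function K_ε(x) = -(|x|²+ε)^{-3} on ℝ¹⁶ ≅ O² has nonnegative definite octonionic Hessian at every point; in particular the diagonal entries satisfy conj∂_α ∂_α K_ε = 48(|x_β|² + ε)/(|x|²+ε)⁵ > 0 for β ≠ α. -/

import Mathlib

noncomputable section

open Quaternion

/-- The octonions, as the Cayley–Dickson double of the quaternions. -/
@[ext] structure Octonion : Type where
  q1 : Quaternion ℝ
  q2 : Quaternion ℝ

namespace Octonion

def equivProd : Octonion ≃ Quaternion ℝ × Quaternion ℝ :=
  ⟨fun x => (x.q1, x.q2), fun p => ⟨p.1, p.2⟩, fun _ => rfl, fun _ => rfl⟩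

instance : AddCommGroup Octonion := equivProd.addCommGroup
instance : Module ℝ Octonion := equivProd.module ℝ
instance : TopologicalSpace Octonion :=
  TopologicalSpace.induced equivProd inferInstance

instance : One Octonion := ⟨⟨1, 0⟩⟩

/-- Cayley–Dickson multiplication: `(a,b)(c,d) = (ac - d̄b, da + b c̄)`. -/
instance : Mul Octonion :=
  ⟨fun x y => ⟨x.q1 * y.q1 - star y.q2 * x.q2, y.q2 * x.q1 + x.q2 * star y.q1⟩⟩

/-- Octonionic conjugation. -/
def conj (x : Octonion) : Octonion := ⟨star x.q1, -x.q2⟩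

/-- The real part of an octonion. -/
def re (x : Octonion) : ℝ := x.q1.re

/-- The imaginary part of an octonion. -/
def im (x : Octonion) : Octonion := (2⁻¹ : ℝ) • (x - conj x)

/-- The squared norm `|x|²` of an octonion. -/
def normSq (x : Octonion) : ℝ := Quaternion.normSq x.q1 + Quaternion.normSq x.q2

/-- The inverse of an octonion (junk value `0` at `0`). -/
def inv (x : Octonion) : Octonion := (normSq x)⁻¹ • conj x

end Octonion

namespace Octonion

/-- The octonion with coordinates `v : Fin 8 → ℝ` in the standard basis `e₀,…,e₇`. -/
def octOf (v : Fin 8 → ℝ) : Octonion := ⟨⟨v 0, v 1, v 2, v 3⟩, ⟨v 4, v 5, v 6, v 7⟩⟩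

/-- The standard basis `e_p`, `p = 0,…,7`, of the octonions, with `e₀ = 1`. -/
def basisE (p : Fin 8) : Octonion := octOf (Pi.single p 1)

end Octonion

/-- Points of `O²` as real coordinates `x = (x_{αp})`, `α ∈ {1,2}`, `p ∈ {0,…,7}`. -/
abbrev OPt : Type := Fin 2 → Fin 8 → ℝ

/-- The octonionic coordinate `x_α` of a point of `O² ≅ ℝ¹⁶`. -/
def octPt (x : OPt) (α : Fin 2) : Octonion := Octonion.octOf (x α)

/-- The squared norm `|x|²` of a point of `O² ≅ ℝ¹⁶`. -/
def ptNormSq (x : OPt) : ℝ := ∑ α : Fin 2, ∑ p : Fin 8, (x α p) ^ 2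

/-- The partial derivative `∂u/∂x_{αp}`. -/
def pd (α : Fin 2) (p : Fin 8) (u : OPt → ℝ) (x : OPt) : ℝ :=
  fderiv ℝ u x (Pi.single α (Pi.single p 1))

/-- The Dirac operator `conj∂_α u = Σ_p e_p ∂u/∂x_{αp}` (for real-valued `u` this is the
octonion whose coordinates are the partial derivatives). -/
def diracD (α : Fin 2) (u : OPt → ℝ) (x : OPt) : Octonion :=
  Octonion.octOf fun p => pd α p u x

/-- The entry `conj∂_α ∂_β u = Σ_{q,p} (∂²u/∂x_{αq}∂x_{βp}) e_q conj(e_p)` of the octonionic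
Hessian of a scalar function `u`. -/
def octHess (u : OPt → ℝ) (α β : Fin 2) (x : OPt) : Octonion :=
  ∑ q : Fin 8, ∑ p : Fin 8,
    (pd α q (fun y => pd β p u y) x) • (Octonion.basisE q * Octonion.conj (Octonion.basisE p))

/-- The determinant of an octonionic Hermitian `2×2` matrix given by its entries:
`det A = a₁₁ a₂₂ - |a₁₂|²` (the diagonal entries being real). -/
def detEntries (A : Fin 2 → Fin 2 → Octonion) : ℝ :=
  Octonion.re (A 0 0) * Octonion.re (A 1 1) - Octonion.normSq (A 0 1)

namespace Octonion

@[simp] lemma add_q1 (x y : Octonion) : (x + y).q1 = x.q1 + y.q1 := rfl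
@[simp] lemma add_q2 (x y : Octonion) : (x + y).q2 = x.q2 + y.q2 := rfl
@[simp] lemma sub_q1 (x y : Octonion) : (x - y).q1 = x.q1 - y.q1 := rfl
@[simp] lemma sub_q2 (x y : Octonion) : (x - y).q2 = x.q2 - y.q2 := rfl
@[simp] lemma neg_q1 (x : Octonion) : (-x).q1 = -x.q1 := rfl
@[simp] lemma neg_q2 (x : Octonion) : (-x).q2 = -x.q2 := rfl
@[simp] lemma zero_q1 : (0 : Octonion).q1 = 0 := rfl
@[simp] lemma zero_q2 : (0 : Octonion).q2 = 0 := rfl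
@[simp] lemma one_q1 : (1 : Octonion).q1 = 1 := rfl
@[simp] lemma one_q2 : (1 : Octonion).q2 = 0 := rfl
@[simp] lemma smul_q1 (r : ℝ) (x : Octonion) : (r • x).q1 = r • x.q1 := rfl
@[simp] lemma smul_q2 (r : ℝ) (x : Octonion) : (r • x).q2 = r • x.q2 := rfl
@[simp] lemma mul_q1 (x y : Octonion) : (x * y).q1 = x.q1 * y.q1 - star y.q2 * x.q2 := rfl
@[simp] lemma mul_q2 (x y : Octonion) : (x * y).q2 = y.q2 * x.q1 + x.q2 * star y.q1 := rfl
@[simp] lemma conj_q1 (x : Octonion) : (conj x).q1 = star x.q1 := rfl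
@[simp] lemma conj_q2 (x : Octonion) : (conj x).q2 = -x.q2 := rfl

lemma re_smul (r : ℝ) (x : Octonion) : re (r • x) = r * re x := by
  simp [re, Quaternion.re_smul, smul_eq_mul]

@[simp] lemma re_one : re (1 : Octonion) = 1 := by simp [re]

lemma smul_mul (r : ℝ) (a b : Octonion) : (r • a) * b = r • (a * b) := by
  ext <;> simp [smul_sub, smul_add, mul_smul_comm, smul_mul_assoc]

lemma mul_smul' (r : ℝ) (a b : Octonion) : a * (r • b) = r • (a * b) := by
  ext <;> simp [Quaternion.star_smul, smul_sub, smul_add, mul_smul_comm, smul_mul_assoc]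

lemma mul_conj_self (x : Octonion) : x * conj x = normSq x • 1 := by
  ext <;>
    simp only [mul_q1, mul_q2, conj_q1, conj_q2, smul_q1, smul_q2, one_q1, one_q2,
      normSq, Quaternion.normSq_def', Quaternion.re_mul, Quaternion.imI_mul,
      Quaternion.imJ_mul, Quaternion.imK_mul, Quaternion.re_sub, Quaternion.imI_sub,
      Quaternion.imJ_sub, Quaternion.imK_sub, Quaternion.re_add, Quaternion.imI_add,
      Quaternion.imJ_add, Quaternion.imK_add, Quaternion.re_star, Quaternion.imI_star,
      Quaternion.imJ_star, Quaternion.imK_star, Quaternion.re_neg, Quaternion.imI_neg,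
      Quaternion.imJ_neg, Quaternion.imK_neg, Quaternion.re_smul, Quaternion.imI_smul,
      Quaternion.imJ_smul, Quaternion.imK_smul, Quaternion.re_one, Quaternion.imI_one,
      Quaternion.imJ_one, Quaternion.imK_one, Quaternion.re_zero, Quaternion.imI_zero,
      Quaternion.imJ_zero, Quaternion.imK_zero, smul_eq_mul] <;>
    ring

lemma normSq_conj (x : Octonion) : normSq (conj x) = normSq x := by
  simp [normSq]

lemma normSq_nonneg (x : Octonion) : 0 ≤ normSq x := by
  have := Quaternion.normSq_nonneg (a := x.q1)
  have := Quaternion.normSq_nonneg (a := x.q2)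
  simp [normSq]; linarith

lemma normSq_mul (a b : Octonion) : normSq (a * b) = normSq a * normSq b := by
  simp only [normSq, mul_q1, mul_q2]
  simp only [Quaternion.normSq_def', Quaternion.re_mul, Quaternion.imI_mul,
    Quaternion.imJ_mul, Quaternion.imK_mul, Quaternion.re_sub, Quaternion.imI_sub,
    Quaternion.imJ_sub, Quaternion.imK_sub, Quaternion.re_add, Quaternion.imI_add,
    Quaternion.imJ_add, Quaternion.imK_add, Quaternion.re_star, Quaternion.imI_star,
    Quaternion.imJ_star, Quaternion.imK_star]
  ring

lemma sq_re_le_normSq (x : Octonion) : re x ^ 2 ≤ normSq x := by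
  have := Quaternion.normSq_nonneg (a := x.q2)
  simp only [normSq, Quaternion.normSq_def', re]
  nlinarith [sq_nonneg x.q1.imI, sq_nonneg x.q1.imJ, sq_nonneg x.q1.imK]

end Octonion
namespace Octonion

lemma mul_add' (a b c : Octonion) : a * (b + c) = a * b + a * c := by
  ext <;> simp <;> ring

lemma add_mul' (a b c : Octonion) : (a + b) * c = a * c + b * c := by
  ext <;> simp <;> ring

lemma conj_add (a b : Octonion) : conj (a + b) = conj a + conj b := by
  ext <;> simp <;> ring

lemma conj_smul (r : ℝ) (a : Octonion) : conj (r • a) = r • conj a := by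
  ext <;> simp

/-- Right multiplication as a linear map. -/
def mulR (b : Octonion) : Octonion →ₗ[ℝ] Octonion where
  toFun a := a * b
  map_add' a a' := add_mul' a a' b
  map_smul' r a := smul_mul r a b

/-- Left multiplication as a linear map. -/
def mulL (a : Octonion) : Octonion →ₗ[ℝ] Octonion where
  toFun b := a * b
  map_add' b b' := mul_add' a b b'
  map_smul' r b := mul_smul' r a b

/-- Conjugation as a linear map. -/
def conjL : Octonion →ₗ[ℝ] Octonion where
  toFun := conj
  map_add' := conj_add
  map_smul' := conj_smul

lemma octOf_eq_sum (v : Fin 8 → ℝ) : octOf v = ∑ p : Fin 8, v p • basisE p := by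
  ext <;>
    simp only [Fin.sum_univ_eight, add_q1, add_q2, smul_q1, smul_q2, Quaternion.re_add,
      Quaternion.imI_add, Quaternion.imJ_add, Quaternion.imK_add, Quaternion.re_smul,
      Quaternion.imI_smul, Quaternion.imJ_smul, Quaternion.imK_smul] <;>
    simp [octOf, basisE, Pi.single_apply]

lemma normSq_octOf (v : Fin 8 → ℝ) : normSq (octOf v) = ∑ p : Fin 8, v p ^ 2 := by
  simp only [normSq, Quaternion.normSq_def']
  simp [Fin.sum_univ_eight, octOf]
  ring

lemma basisE_mul_conj_self (q : Fin 8) : basisE q * conj (basisE q) = 1 := by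
  rw [mul_conj_self]
  have : normSq (basisE q) = 1 := by
    rw [basisE, normSq_octOf]
    fin_cases q <;> simp [Fin.sum_univ_eight, Pi.single_apply]
  rw [this, one_smul]

lemma octOf_mul_conj_octOf (c d : Fin 8 → ℝ) :
    octOf c * conj (octOf d)
      = ∑ q : Fin 8, ∑ p : Fin 8, (c q * d p) • (basisE q * conj (basisE p)) := by
  have h1 : conj (octOf d) = ∑ p : Fin 8, d p • conj (basisE p) := by
    rw [octOf_eq_sum d, show conj = (conjL : Octonion →ₗ[ℝ] Octonion) from rfl, map_sum]
    simp [conjL, conj_smul]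
  rw [octOf_eq_sum c]
  rw [show (∑ q : Fin 8, c q • basisE q) * conj (octOf d)
      = mulR (conj (octOf d)) (∑ q : Fin 8, c q • basisE q) from rfl, map_sum]
  refine Finset.sum_congr rfl fun q _ => ?_
  rw [map_smul]
  show c q • (basisE q * conj (octOf d)) = _
  rw [h1, show basisE q * (∑ p : Fin 8, d p • conj (basisE p))
      = mulL (basisE q) (∑ p : Fin 8, d p • conj (basisE p)) from rfl, map_sum,
    Finset.smul_sum]
  refine Finset.sum_congr rfl fun p _ => ?_
  rw [map_smul, smul_smul]
  rfl

end Octonion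
open Octonion

/-- The coordinate `x_{αp}` as a continuous linear map. -/
def Lc (α : Fin 2) (p : Fin 8) : OPt →L[ℝ] ℝ :=
  (ContinuousLinearMap.proj p : (Fin 8 → ℝ) →L[ℝ] ℝ).comp
    (ContinuousLinearMap.proj α : OPt →L[ℝ] (Fin 8 → ℝ))

lemma Lc_apply (α : Fin 2) (p : Fin 8) (v : OPt) : Lc α p v = v α p := rfl

lemma Lc_single (α β : Fin 2) (p q : Fin 8) :
    Lc α p (Pi.single β (Pi.single q 1)) =
      if α = β then (if p = q then (1 : ℝ) else 0) else 0 := by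
  rw [Lc_apply]
  by_cases h1 : α = β <;> by_cases h2 : p = q <;> simp [Pi.single_apply, h1, h2]

/-- The differential of `ptNormSq` at `x`. -/
def LS (x : OPt) : OPt →L[ℝ] ℝ := ∑ α : Fin 2, ∑ p : Fin 8, (2 * x α p) • Lc α p

lemma hasFDerivAt_ptNormSq (x : OPt) : HasFDerivAt ptNormSq (LS x) x := by
  have h : ∀ α : Fin 2, ∀ p : Fin 8,
      HasFDerivAt (fun y : OPt => (y α p) ^ 2) ((2 * x α p) • Lc α p) x := by
    intro α p
    have h := ((Lc α p).hasFDerivAt (x := x)).mul ((Lc α p).hasFDerivAt (x := x))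
    have he : (fun y : OPt => (y α p) ^ 2) = fun y => Lc α p y * Lc α p y := by
      funext y; rw [Lc_apply]; ring
    rw [he]
    refine h.congr_fderiv ?_
    rw [Lc_apply, two_mul, add_smul]
  have := HasFDerivAt.sum (u := (Finset.univ : Finset (Fin 2)))
    (fun α _ => HasFDerivAt.sum (u := (Finset.univ : Finset (Fin 8))) (fun p _ => h α p))
  exact this

lemma LS_single (x : OPt) (β : Fin 2) (p : Fin 8) :
    LS x (Pi.single β (Pi.single p 1)) = 2 * x β p := by
  simp [LS, ContinuousLinearMap.sum_apply, Lc_single, Finset.sum_ite_eq, mul_ite]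
  fin_cases β <;> simp

lemma ptNormSq_nonneg (x : OPt) : 0 ≤ ptNormSq x := by
  unfold ptNormSq; positivity

section

variable (ε : ℝ) (hε : 0 < ε)
include hε

lemma tpos (y : OPt) : 0 < ptNormSq y + ε := by
  have := ptNormSq_nonneg y; linarith

lemma hasFDerivAt_K (y : OPt) :
    HasFDerivAt (fun z => -((ptNormSq z + ε) ^ 3)⁻¹)
      ((3 * ((ptNormSq y + ε) ^ 4)⁻¹) • LS y) y := by
  have ht : 0 < ptNormSq y + ε := tpos ε hε y
  have ha : HasDerivAt (fun s : ℝ => (s + ε) ^ 3)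
      ((3 : ℕ) * (ptNormSq y + ε) ^ 2 * 1) (ptNormSq y) :=
    ((hasDerivAt_id (ptNormSq y)).add_const ε).pow 3
  have hb := (ha.inv (pow_ne_zero 3 ht.ne')).neg
  have hc : HasDerivAt (fun s : ℝ => -((s + ε) ^ 3)⁻¹)
      (3 * ((ptNormSq y + ε) ^ 4)⁻¹) (ptNormSq y) := by
    refine hb.congr_deriv ?_
    field_simp
    ring
  exact hc.comp_hasFDerivAt y (hasFDerivAt_ptNormSq y)

lemma pd_K (β : Fin 2) (p : Fin 8) (y : OPt) :
    pd β p (fun z => -((ptNormSq z + ε) ^ 3)⁻¹) y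
      = 6 * y β p * ((ptNormSq y + ε) ^ 4)⁻¹ := by
  rw [pd, (hasFDerivAt_K ε hε y).fderiv]
  simp [LS_single]
  ring

lemma pd2_K (α β : Fin 2) (q p : Fin 8) (x : OPt) :
    pd α q (fun y => pd β p (fun z => -((ptNormSq z + ε) ^ 3)⁻¹) y) x
      = (if α = β then (if q = p then (6 : ℝ) else 0) else 0) * ((ptNormSq x + ε) ^ 4)⁻¹
        - 48 * x α q * x β p * ((ptNormSq x + ε) ^ 5)⁻¹ := by
  have hfun : (fun y => pd β p (fun z => -((ptNormSq z + ε) ^ 3)⁻¹) y)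
      = fun y => 6 * y β p * ((ptNormSq y + ε) ^ 4)⁻¹ := by
    funext y; exact pd_K ε hε β p y
  rw [hfun]
  have ht : 0 < ptNormSq x + ε := tpos ε hε x
  -- derivative of the inverse fourth power
  have ha : HasDerivAt (fun s : ℝ => (s + ε) ^ 4)
      ((4 : ℕ) * (ptNormSq x + ε) ^ 3 * 1) (ptNormSq x) :=
    ((hasDerivAt_id (ptNormSq x)).add_const ε).pow 4
  have hb := ha.inv (pow_ne_zero 4 ht.ne')
  have hg : HasFDerivAt (fun y : OPt => ((ptNormSq y + ε) ^ 4)⁻¹)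
      (((-((4 : ℕ) * (ptNormSq x + ε) ^ 3 * 1)) / ((ptNormSq x + ε) ^ 4) ^ 2) • LS x) x :=
    hb.comp_hasFDerivAt x (hasFDerivAt_ptNormSq x)
  have hf : HasFDerivAt (fun y : OPt => 6 * y β p)
      ((6 : ℝ) • Lc β p) x := by
    simpa [Lc_apply] using ((Lc β p).hasFDerivAt (x := x)).const_mul (6 : ℝ)
  have hw := hf.mul hg
  rw [pd, (show HasFDerivAt (fun y : OPt => 6 * y β p * ((ptNormSq y + ε) ^ 4)⁻¹) _ x
    from hw).fderiv]
  simp only [ContinuousLinearMap.add_apply, ContinuousLinearMap.smul_apply,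
    LS_single, Lc_single, smul_eq_mul]
  have htne : (ptNormSq x + ε) ≠ 0 := ht.ne'
  by_cases h1 : α = β <;> by_cases h2 : q = p <;>
    simp [h1, h2, eq_comm] <;> field_simp <;> ring

end
section
variable (ε : ℝ) (hε : 0 < ε)

lemma sum_smul_mulconj (c : ℝ) (v w : Fin 8 → ℝ) :
    ∑ q : Fin 8, ∑ p : Fin 8, (c * (v q * w p)) • (basisE q * conj (basisE p))
      = c • (octOf v * conj (octOf w)) := by
  rw [octOf_mul_conj_octOf, Finset.smul_sum]
  refine Finset.sum_congr rfl fun q _ => ?_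
  rw [Finset.smul_sum]
  exact Finset.sum_congr rfl fun p _ => (smul_smul _ _ _).symm

include hε

lemma octHess_diag (α : Fin 2) (x : OPt) :
    octHess (fun z => -((ptNormSq z + ε) ^ 3)⁻¹) α α x
      = (48 * ((ptNormSq x + ε) ^ 4)⁻¹
          - 48 * ((ptNormSq x + ε) ^ 5)⁻¹ * normSq (octOf (x α))) • (1 : Octonion) := by
  unfold octHess
  have h : ∀ q p : Fin 8,
      (pd α q (fun y => pd α p (fun z => -((ptNormSq z + ε) ^ 3)⁻¹) y) x)
          • (basisE q * conj (basisE p))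
        = (if q = p then (6 * ((ptNormSq x + ε) ^ 4)⁻¹) • (basisE q * conj (basisE p)) else 0)
          - ((48 * ((ptNormSq x + ε) ^ 5)⁻¹) * (x α q * x α p))
              • (basisE q * conj (basisE p)) := by
    intro q p
    rw [pd2_K ε hε, sub_smul]
    congr 1
    · by_cases h2 : q = p <;> simp [h2]
    · congr 1
      ring
  simp only [h, Finset.sum_sub_distrib]
  rw [sum_smul_mulconj, mul_conj_self]
  have hA : ∀ q : Fin 8,
      (∑ p : Fin 8, if q = p then
          (6 * ((ptNormSq x + ε) ^ 4)⁻¹) • (basisE q * conj (basisE p)) else 0)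
        = (6 * ((ptNormSq x + ε) ^ 4)⁻¹) • (1 : Octonion) := by
    intro q
    rw [Finset.sum_ite_eq]
    simp [basisE_mul_conj_self]
  simp only [hA]
  rw [Finset.sum_const, Finset.card_univ, Fintype.card_fin,
    ← Nat.cast_smul_eq_nsmul ℝ, smul_smul, smul_smul, sub_smul]
  norm_num
  congr 1
  ring

lemma octHess_offdiag (α β : Fin 2) (hab : α ≠ β) (x : OPt) :
    octHess (fun z => -((ptNormSq z + ε) ^ 3)⁻¹) α β x
      = -((48 * ((ptNormSq x + ε) ^ 5)⁻¹) • (octOf (x α) * conj (octOf (x β)))) := by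
  unfold octHess
  have h : ∀ q p : Fin 8,
      (pd α q (fun y => pd β p (fun z => -((ptNormSq z + ε) ^ 3)⁻¹) y) x)
          • (basisE q * conj (basisE p))
        = -(((48 * ((ptNormSq x + ε) ^ 5)⁻¹) * (x α q * x β p))
              • (basisE q * conj (basisE p))) := by
    intro q p
    rw [pd2_K ε hε]
    simp only [hab, if_false]
    rw [← neg_smul]
    congr 1
    ring
  simp only [h, Finset.sum_neg_distrib]
  rw [sum_smul_mulconj]

end

lemma quad_key (ε m1 m2 n0 n1 r : ℝ) (hε : 0 < ε) (hm1 : 0 ≤ m1) (hm2 : 0 ≤ m2)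
    (hn0 : 0 ≤ n0) (hn1 : 0 ≤ n1) (hr2 : r ^ 2 ≤ m1 * (n0 * n1) * m2) :
    2 * r ≤ (n1 + ε) * m1 + (n0 + ε) * m2 := by
  have hs : 0 ≤ (n1 + ε) * m1 + (n0 + ε) * m2 := by positivity
  nlinarith [hr2, hs, sq_nonneg ((n1 + ε) * m1 - (n0 + ε) * m2),
    mul_nonneg (mul_nonneg hε.le hm1) hm2,
    mul_nonneg (mul_nonneg (mul_nonneg hε.le hn0) hm1) hm2,
    mul_nonneg (mul_nonneg (mul_nonneg hε.le hn1) hm1) hm2,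
    mul_nonneg (mul_nonneg (mul_nonneg hε.le hε.le) hm1) hm2]

lemma quad_final (U m1 m2 n0 n1 r ε : ℝ) (hU : 0 ≤ U)
    (hkey : 2 * r ≤ (n1 + ε) * m1 + (n0 + ε) * m2) :
    0 ≤ 48 * (n1 + ε) * U * m1 + 48 * (n0 + ε) * U * m2 + 2 * (-(48 * U) * r) := by
  nlinarith [mul_nonneg hU (sub_nonneg.mpr hkey)]

open Octonion in
/-- The octonionic Hessian of `K_ε(x) = -(|x|²+ε)⁻³` is nonnegative definite
at every point, and its diagonal entries satisfy
`conj∂_α ∂_α K_ε = 48(|x_β|²+ε)/(|x|²+ε)⁵ > 0` for `β ≠ α`. -/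
theorem octHess_Keps_posSemidef (ε : ℝ) (hε : 0 < ε) (x : OPt) :
    (∀ ξ₁ ξ₂ : Octonion,
      0 ≤ re (octHess (fun y => -((ptNormSq y + ε) ^ 3)⁻¹) 0 0 x) * normSq ξ₁ +
          re (octHess (fun y => -((ptNormSq y + ε) ^ 3)⁻¹) 1 1 x) * normSq ξ₂ +
          2 * re ((conj ξ₁ * octHess (fun y => -((ptNormSq y + ε) ^ 3)⁻¹) 0 1 x) * ξ₂)) ∧
    (∀ α β : Fin 2, α ≠ β →
      octHess (fun y => -((ptNormSq y + ε) ^ 3)⁻¹) α α x =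
        (48 * (normSq (octPt x β) + ε) * ((ptNormSq x + ε) ^ 5)⁻¹) • (1 : Octonion) ∧
      0 < 48 * (normSq (octPt x β) + ε) * ((ptNormSq x + ε) ^ 5)⁻¹) := by
  have ht : 0 < ptNormSq x + ε := tpos ε hε x
  have hn0 : 0 ≤ normSq (octOf (x 0)) := normSq_nonneg _
  have hn1 : 0 ≤ normSq (octOf (x 1)) := normSq_nonneg _
  have hsum : ptNormSq x = normSq (octOf (x 0)) + normSq (octOf (x 1)) := by
    rw [normSq_octOf, normSq_octOf, ptNormSq, Fin.sum_univ_two]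
  set n0 := normSq (octOf (x 0)) with hn0def
  set n1 := normSq (octOf (x 1)) with hn1def
  set U := ((ptNormSq x + ε) ^ 5)⁻¹ with hUdef
  have hU : 0 < U := by rw [hUdef]; positivity
  have hne : ptNormSq x + ε ≠ 0 := ht.ne'
  have hT0 : 48 * ((ptNormSq x + ε) ^ 4)⁻¹ - 48 * U * n0 = 48 * (n1 + ε) * U := by
    rw [hUdef, hsum]; field_simp; ring
  have hT1 : 48 * ((ptNormSq x + ε) ^ 4)⁻¹ - 48 * U * n1 = 48 * (n0 + ε) * U := by
    rw [hUdef, hsum]; field_simp; ring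
  have h00 : octHess (fun y => -((ptNormSq y + ε) ^ 3)⁻¹) 0 0 x
      = (48 * (n1 + ε) * U) • (1 : Octonion) := by
    rw [octHess_diag ε hε 0 x, ← hn0def, ← hUdef, hT0]
  have h11 : octHess (fun y => -((ptNormSq y + ε) ^ 3)⁻¹) 1 1 x
      = (48 * (n0 + ε) * U) • (1 : Octonion) := by
    rw [octHess_diag ε hε 1 x, ← hn1def, ← hUdef, hT1]
  have h01 : octHess (fun y => -((ptNormSq y + ε) ^ 3)⁻¹) 0 1 x
      = (-(48 * U)) • (octOf (x 0) * conj (octOf (x 1))) := by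
    rw [octHess_offdiag ε hε 0 1 (by decide) x, ← hUdef, neg_smul]
  constructor
  · intro ξ₁ ξ₂
    have hm1 : 0 ≤ normSq ξ₁ := normSq_nonneg _
    have hm2 : 0 ≤ normSq ξ₂ := normSq_nonneg _
    set M := octOf (x 0) * conj (octOf (x 1)) with hM
    set r := re ((conj ξ₁ * M) * ξ₂) with hr
    have hre : re ((conj ξ₁ * octHess (fun y => -((ptNormSq y + ε) ^ 3)⁻¹) 0 1 x) * ξ₂)
        = (-(48 * U)) * r := by
      rw [h01, mul_smul', smul_mul, re_smul]
    have hr2 : r ^ 2 ≤ normSq ξ₁ * (n0 * n1) * normSq ξ₂ := by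
      have h1 : normSq ((conj ξ₁ * M) * ξ₂)
          = normSq ξ₁ * (n0 * n1) * normSq ξ₂ := by
        rw [normSq_mul, normSq_mul, normSq_conj, hM, normSq_mul, normSq_conj,
          ← hn0def, ← hn1def]
      rw [← h1]
      exact sq_re_le_normSq _
    rw [h00, h11, hre, re_smul, re_smul, re_one, mul_one, mul_one]
    have key := quad_key ε (normSq ξ₁) (normSq ξ₂) n0 n1 r hε hm1 hm2 hn0 hn1 hr2
    exact quad_final U (normSq ξ₁) (normSq ξ₂) n0 n1 r ε hU.le key
  · intro α β hab
    have hcase : (α = 0 ∧ β = 1) ∨ (α = 1 ∧ β = 0) := by omega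
    rcases hcase with ⟨ha, hb⟩ | ⟨ha, hb⟩ <;> subst ha <;> subst hb
    · refine ⟨?_, ?_⟩
      · rw [show normSq (octPt x 1) = n1 from rfl]
        exact h00
      · rw [show normSq (octPt x 1) = n1 from rfl]
        have h1 : 0 < n1 + ε := by linarith
        exact mul_pos (mul_pos (by norm_num) h1) hU
    · refine ⟨?_, ?_⟩
      · rw [show normSq (octPt x 0) = n0 from rfl]
        exact h11
      · rw [show normSq (octPt x 0) = n0 from rfl]
        have h1 : 0 < n0 + ε := by linarith
        exact mul_pos (mul_pos (by norm_num) h1) hU
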